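/- For x ∈ R(E), u ∈ R(F,H), and v ∈ W(F,H), the η-reduced action satisfies x • (uv) = (x • u)·v; i.e., the reduced action is W(F,H)-linear on the right. -/

import Mathlib

open Polynomial

inductive SmithGen : Type
  | E | F | H

open SmithGen in
inductive SmithRel (f : ℂ[X]) : FreeAlgebra ℂ SmithGen → FreeAlgebra ℂ SmithGen → Prop
  | ef : SmithRel f (FreeAlgebra.ι ℂ E * FreeAlgebra.ι ℂ F - FreeAlgebra.ι ℂ F * FreeAlgebra.ι ℂ E)
      (aeval (FreeAlgebra.ι ℂ H) f)
  | he : SmithRel f (FreeAlgebra.ι ℂ H * FreeAlgebra.ι ℂ E - FreeAlgebra.ι ℂ E * FreeAlgebra.ι ℂ H)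
      (FreeAlgebra.ι ℂ E)
  | hf : SmithRel f (FreeAlgebra.ι ℂ H * FreeAlgebra.ι ℂ F - FreeAlgebra.ι ℂ F * FreeAlgebra.ι ℂ H)
      (-FreeAlgebra.ι ℂ F)

/-- Smith's algebra `R(f)`, similar to `U(sl₂)`. -/
abbrev SmithAlgebra (f : ℂ[X]) : Type := RingQuot (SmithRel f)

noncomputable def SmithE (f : ℂ[X]) : SmithAlgebra f :=
  RingQuot.mkAlgHom ℂ (SmithRel f) (FreeAlgebra.ι ℂ SmithGen.E)

noncomputable def SmithF (f : ℂ[X]) : SmithAlgebra f :=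
  RingQuot.mkAlgHom ℂ (SmithRel f) (FreeAlgebra.ι ℂ SmithGen.F)

noncomputable def SmithH (f : ℂ[X]) : SmithAlgebra f :=
  RingQuot.mkAlgHom ℂ (SmithRel f) (FreeAlgebra.ι ℂ SmithGen.H)

/-- The Casimir element `Ω = 2FE + u(H+1)`. -/
noncomputable def SmithOmega (f u : ℂ[X]) : SmithAlgebra f :=
  2 * SmithF f * SmithE f + aeval (SmithH f) (u.comp (X + 1))

/-- The subalgebra `R(E)` of `R(f)` generated by `E`. -/
noncomputable def SmithRE (f : ℂ[X]) : Subalgebra ℂ (SmithAlgebra f) :=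
  Algebra.adjoin ℂ {SmithE f}

/-- The subalgebra `R(F,H)` of `R(f)` generated by `F` and `H`. -/
noncomputable def SmithRFH (f : ℂ[X]) : Subalgebra ℂ (SmithAlgebra f) :=
  Algebra.adjoin ℂ {SmithF f, SmithH f}

/-- `E` as an element of `R(E)`. -/
noncomputable def SmithE' (f : ℂ[X]) : SmithRE f :=
  ⟨SmithE f, Algebra.self_mem_adjoin_singleton ℂ _⟩

/-- The subspace `R(f)·R_η(E)` of `R(f)`, where `R_η(E) = ker η`. -/
noncomputable def SmithEtaIdeal (f : ℂ[X]) (η : SmithRE f →ₐ[ℂ] ℂ) :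
    Submodule ℂ (SmithAlgebra f) :=
  Submodule.span ℂ {z | ∃ (r : SmithAlgebra f) (x : SmithRE f), η x = 0 ∧ z = r * (x : SmithAlgebra f)}


section Aux

variable (f : ℂ[X])

lemma smith_adjoin_top :
    Algebra.adjoin ℂ {SmithE f, SmithF f, SmithH f} = ⊤ := by
  rw [eq_top_iff]
  have h1 : (⊤ : Subalgebra ℂ (SmithAlgebra f)) =
      Subalgebra.map (RingQuot.mkAlgHom ℂ (SmithRel f)) ⊤ := by
    rw [Algebra.map_top]
    exact (AlgHom.range_eq_top _).mpr
      (RingQuot.mkAlgHom_surjective ℂ (SmithRel f)) |>.symm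
  rw [h1, ← FreeAlgebra.adjoin_range_ι, AlgHom.map_adjoin]
  apply Algebra.adjoin_mono
  rintro _ ⟨_, ⟨g, rfl⟩, rfl⟩
  cases g with
  | E => exact Or.inl rfl
  | F => exact Or.inr (Or.inl rfl)
  | H => exact Or.inr (Or.inr rfl)

lemma smith_EF_rel :
    SmithE f * SmithF f = aeval (SmithH f) f + SmithF f * SmithE f := by
  have h1 := RingQuot.mkAlgHom_rel ℂ (SmithRel.ef (f := f))
  rw [map_sub, map_mul, map_mul, ← Polynomial.aeval_algHom_apply] at h1
  rw [show aeval ((RingQuot.mkAlgHom ℂ (SmithRel f)) (FreeAlgebra.ι ℂ SmithGen.H)) f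
      = aeval (SmithH f) f from rfl] at h1
  rw [show (RingQuot.mkAlgHom ℂ (SmithRel f)) (FreeAlgebra.ι ℂ SmithGen.E) = SmithE f from rfl,
      show (RingQuot.mkAlgHom ℂ (SmithRel f)) (FreeAlgebra.ι ℂ SmithGen.F) = SmithF f from rfl]
      at h1
  linear_combination (norm := noncomm_ring) h1

lemma smith_EH_rel :
    SmithE f * SmithH f = (SmithH f - 1) * SmithE f := by
  have h1 := RingQuot.mkAlgHom_rel ℂ (SmithRel.he (f := f))
  rw [map_sub, map_mul, map_mul] at h1
  rw [show (RingQuot.mkAlgHom ℂ (SmithRel f)) (FreeAlgebra.ι ℂ SmithGen.E) = SmithE f from rfl,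
      show (RingQuot.mkAlgHom ℂ (SmithRel f)) (FreeAlgebra.ι ℂ SmithGen.H) = SmithH f from rfl]
      at h1
  have hexp : (SmithH f - 1) * SmithE f = SmithH f * SmithE f - SmithE f := by
    rw [sub_mul, one_mul]
  rw [hexp, eq_sub_iff_add_eq, sub_eq_iff_eq_add.mp h1]
  exact add_comm _ _

lemma smith_aeval_mem {S : Subalgebra ℂ (SmithAlgebra f)} {a : SmithAlgebra f}
    (ha : a ∈ S) (p : ℂ[X]) : aeval a p ∈ S := by
  have := Polynomial.aeval_algHom_apply S.val (⟨a, ha⟩ : S) p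
  simp only [Subalgebra.coe_val] at this
  rw [this]
  exact SetLike.coe_mem _

/-- `E·w ∈ R(F,H) + R(F,H)·E` for `w ∈ R(F,H)`. -/
lemma smith_E_mul_mem : ∀ w ∈ SmithRFH f,
    ∃ a ∈ SmithRFH f, ∃ b ∈ SmithRFH f, SmithE f * w = a + b * SmithE f := by
  intro w hw
  induction hw using Algebra.adjoin_induction with
  | mem g hg =>
    rcases hg with rfl | rfl
    · exact ⟨aeval (SmithH f) f,
        smith_aeval_mem f (Algebra.subset_adjoin (Or.inr rfl)) f,
        SmithF f, Algebra.subset_adjoin (Or.inl rfl), smith_EF_rel f⟩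
    · exact ⟨0, zero_mem _, SmithH f - 1,
        sub_mem (Algebra.subset_adjoin (Or.inr rfl)) (one_mem _),
        by rw [smith_EH_rel f, zero_add]⟩
  | algebraMap r =>
    exact ⟨0, zero_mem _, algebraMap ℂ _ r, algebraMap_mem _ r,
      by rw [zero_add, Algebra.commutes]⟩
  | add w1 w2 hw1 hw2 ih1 ih2 =>
    obtain ⟨a1, ha1, b1, hb1, h1⟩ := ih1
    obtain ⟨a2, ha2, b2, hb2, h2⟩ := ih2
    exact ⟨a1 + a2, add_mem ha1 ha2, b1 + b2, add_mem hb1 hb2,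
      by rw [mul_add, h1, h2]; noncomm_ring⟩
  | mul w1 w2 hw1 hw2 ih1 ih2 =>
    obtain ⟨a1, ha1, b1, hb1, h1⟩ := ih1
    obtain ⟨a2, ha2, b2, hb2, h2⟩ := ih2
    refine ⟨a1 * w2 + b1 * a2, add_mem (mul_mem ha1 hw2) (mul_mem hb1 ha2),
      b1 * b2, mul_mem hb1 hb2, ?_⟩
    have : SmithE f * (w1 * w2) = (SmithE f * w1) * w2 := by noncomm_ring
    rw [this, h1, add_mul, mul_assoc, mul_assoc, h2, mul_add, ← mul_assoc]
    noncomm_ring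

variable (η : SmithRE f →ₐ[ℂ] ℂ)

lemma smith_ideal_mul_left (r : SmithAlgebra f) :
    ∀ k ∈ SmithEtaIdeal f η, r * k ∈ SmithEtaIdeal f η := by
  intro k hk
  induction hk using Submodule.span_induction with
  | mem z hz =>
    obtain ⟨r', x, hx, rfl⟩ := hz
    exact Submodule.subset_span ⟨r * r', x, hx, (mul_assoc r r' _).symm⟩
  | zero => rw [mul_zero]; exact zero_mem _
  | add x y hx hy ihx ihy => rw [mul_add]; exact add_mem ihx ihy
  | smul c x hx ih => rw [mul_smul_comm]; exact Submodule.smul_mem _ _ ih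

/-- `R = R(F,H) + R·ker η`. -/
lemma smith_decomp (r : SmithAlgebra f) :
    r ∈ Subalgebra.toSubmodule (SmithRFH f) ⊔ SmithEtaIdeal f η := by
  set S := Subalgebra.toSubmodule (SmithRFH f) ⊔ SmithEtaIdeal f η with hS
  have hA : ∀ a ∈ SmithRFH f, a ∈ S := fun a ha =>
    Submodule.mem_sup_left (by exact ha)
  have hI : ∀ k ∈ SmithEtaIdeal f η, k ∈ S := fun k hk => Submodule.mem_sup_right hk
  -- b * E ∈ S for b ∈ R(F,H)
  have hbE : ∀ b ∈ SmithRFH f, b * SmithE f ∈ S := by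
    intro b hb
    set c : ℂ := η (SmithE' f) with hc
    have hx0 : η (SmithE' f - algebraMap ℂ _ c) = 0 := by
      have h := map_sub η (SmithE' f) (algebraMap ℂ (SmithRE f) c)
      rw [h, AlgHom.commutes]
      simp [hc]
    have hgen : b * ((SmithE' f - algebraMap ℂ _ c : SmithRE f) : SmithAlgebra f)
        ∈ SmithEtaIdeal f η :=
      Submodule.subset_span ⟨b, _, hx0, rfl⟩
    have hcoe : ((SmithE' f - algebraMap ℂ _ c : SmithRE f) : SmithAlgebra f)
        = SmithE f - algebraMap ℂ _ c := rfl
    have heq : b * SmithE f = c • b + b * ((SmithE' f - algebraMap ℂ _ c : SmithRE f) :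
        SmithAlgebra f) := by
      rw [hcoe, mul_sub, ← Algebra.commutes c b, ← Algebra.smul_def]
      abel
    rw [heq]
    exact add_mem (Submodule.mem_sup_left (Submodule.smul_mem _ _ (by exact hb))) (hI _ hgen)
  -- E * s ∈ S for s ∈ S
  have hEs : ∀ s ∈ S, SmithE f * s ∈ S := by
    intro s hs
    obtain ⟨a, ha, k, hk, rfl⟩ := Submodule.mem_sup.mp hs
    rw [mul_add]
    refine add_mem ?_ (hI _ (smith_ideal_mul_left f η _ _ hk))
    obtain ⟨a', ha', b', hb', h⟩ := smith_E_mul_mem f a ha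
    rw [h]
    exact add_mem (hA _ ha') (hbE _ hb')
  -- left multiplication preserves S
  have hmul : ∀ g : SmithAlgebra f, ∀ s ∈ S, g * s ∈ S := by
    intro g
    have hg : g ∈ Algebra.adjoin ℂ {SmithE f, SmithF f, SmithH f} := by
      rw [smith_adjoin_top f]; trivial
    induction hg using Algebra.adjoin_induction with
    | mem y hy =>
      rcases hy with rfl | rfl | rfl
      · exact hEs
      · intro s hs
        obtain ⟨a, ha, k, hk, rfl⟩ := Submodule.mem_sup.mp hs
        rw [mul_add]
        exact add_mem (hA _ (mul_mem (Algebra.subset_adjoin (Or.inl rfl)) ha))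
          (hI _ (smith_ideal_mul_left f η _ _ hk))
      · intro s hs
        obtain ⟨a, ha, k, hk, rfl⟩ := Submodule.mem_sup.mp hs
        rw [mul_add]
        exact add_mem (hA _ (mul_mem (Algebra.subset_adjoin (Or.inr rfl)) ha))
          (hI _ (smith_ideal_mul_left f η _ _ hk))
    | algebraMap r =>
      intro s hs
      rw [Algebra.algebraMap_eq_smul_one, smul_mul_assoc, one_mul]
      exact Submodule.smul_mem _ _ hs
    | add g1 g2 hg1 hg2 ih1 ih2 =>
      intro s hs
      rw [add_mul]
      exact add_mem (ih1 s hs) (ih2 s hs)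
    | mul g1 g2 hg1 hg2 ih1 ih2 =>
      intro s hs
      rw [mul_assoc]
      exact ih1 _ (ih2 s hs)
  have h1 : (1 : SmithAlgebra f) ∈ S := hA 1 (one_mem _)
  simpa using hmul r 1 h1

end Aux

/-- The `η`-reduced action `x • v = (xv)^η - η(x)v` is right `W(F,H)`-linear:
for `x ∈ R(E)`, `u ∈ R(F,H)` and `v ∈ W(F,H) = π(Z(R))`, `x • (uv) = (x • u)·v`. -/
theorem smith_reduced_action_W_linear (f : ℂ[X]) (η : SmithRE f →ₐ[ℂ] ℂ)
    (hη : η (SmithE' f) ≠ 0)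
    (π : SmithAlgebra f →ₗ[ℂ] SmithAlgebra f)
    (hrange : ∀ r : SmithAlgebra f, π r ∈ SmithRFH f)
    (hid : ∀ a ∈ SmithRFH f, π a = a)
    (hker : ∀ k ∈ SmithEtaIdeal f η, π k = 0)
    (x : SmithRE f) (u v : SmithAlgebra f)
    (hu : u ∈ SmithRFH f)
    (hv : v ∈ π '' (Subalgebra.center ℂ (SmithAlgebra f) : Set (SmithAlgebra f))) :
    π ((x : SmithAlgebra f) * (u * v)) - η x • (u * v) =
      (π ((x : SmithAlgebra f) * u) - η x • u) * v := by
  obtain ⟨z, hz, rfl⟩ := hv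
  set I := SmithEtaIdeal f η with hI
  have hproj : ∀ r : SmithAlgebra f, r - π r ∈ I := by
    intro r
    obtain ⟨a, ha, k, hk, hak⟩ := Submodule.mem_sup.mp (smith_decomp f η r)
    have hπ : π (a + k) = a := by
      rw [map_add, hid a ha, hker k hk, add_zero]
    rw [← hak, hπ, add_sub_cancel_left]
    exact hk
  have hcomm : ∀ g : SmithAlgebra f, g * z = z * g :=
    Subalgebra.mem_center_iff.mp hz
  set X := (x : SmithAlgebra f)
  have key : π (X * (u * π z)) = π (X * u) * π z := by
    set k1 := z - π z with hk1
    set k2 := X * u - π (X * u) with hk2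
    have hdiff : X * (u * π z) - π (X * u) * π z
        = z * k2 + π (X * u) * k1 - X * u * k1 := by
      rw [hk1, hk2, mul_sub, mul_sub, mul_sub, ← hcomm (X * u), ← hcomm (π (X * u))]
      noncomm_ring
    have hmem : X * (u * π z) - π (X * u) * π z ∈ I := by
      rw [hdiff]
      exact sub_mem (add_mem (smith_ideal_mul_left f η _ _ (hproj (X * u)))
        (smith_ideal_mul_left f η _ _ (hproj z)))
        (smith_ideal_mul_left f η _ _ (hproj z))
    have h0 : π (X * (u * π z) - π (X * u) * π z) = 0 := hker _ hmem
    rw [map_sub, sub_eq_zero] at h0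
    rw [h0]
    exact hid _ (mul_mem (hrange (X * u)) (hrange z))
  rw [key, sub_mul, smul_mul_assoc]
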